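/- Let Θ be an antisymmetric real n×n matrix and M a real n×n matrix. Set F = M − Mᵀ + Mᵀ Θ M, F^s = M − Mᵀ + M Θ Mᵀ and J = I − M Θ. Assume J and I − Θ F are invertible, and put G = J^{-1} F^s (J^{-1})ᵀ. Then G = F (I − Θ F)^{-1}, the matrix I + G Θ is invertible, and F = (I + G Θ)^{-1} G. -/

import Mathlib

open Matrix

theorem stmt_7 {n : ℕ} (Θ M : Matrix (Fin n) (Fin n) ℝ)
    (hΘ : Θᵀ = -Θ)
    (F Fs J G : Matrix (Fin n) (Fin n) ℝ)
    (hF : F = M - Mᵀ + Mᵀ * Θ * M)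
    (hFs : Fs = M - Mᵀ + M * Θ * Mᵀ)
    (hJ : J = 1 - M * Θ)
    (hJinv : IsUnit J) (hinv : IsUnit (1 - Θ * F))
    (hG : G = J⁻¹ * Fs * (J⁻¹)ᵀ) :
    G = F * (1 - Θ * F)⁻¹ ∧ IsUnit (1 + G * Θ) ∧ F = (1 + G * Θ)⁻¹ * G := by
  set A := 1 - Θ * F with hA
  set K := 1 - Θ * M with hK
  have hJd : IsUnit J.det := (Matrix.isUnit_iff_isUnit_det J).mp hJinv
  have hAd : IsUnit A.det := (Matrix.isUnit_iff_isUnit_det A).mp hinv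
  have hJT : Jᵀ = 1 + Θ * Mᵀ := by
    rw [hJ]
    simp [transpose_sub, transpose_mul, hΘ, sub_neg_eq_add, neg_mul]
  have hJTd : IsUnit Jᵀ.det := by rwa [Matrix.det_transpose]
  -- J * F = Fs * K
  have h1 : Fs * K = J * F := by
    rw [hF, hFs, hJ, hK]; noncomm_ring
  -- Jᵀ * K = A
  have h2 : Jᵀ * K = A := by
    rw [hJT, hK, hA, hF]; noncomm_ring
  have hKd : IsUnit K.det := by
    have := hAd
    rw [← h2, Matrix.det_mul] at this
    exact isUnit_of_mul_isUnit_right this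
  -- K⁻¹ = A⁻¹ * Jᵀ
  have hKinv : K⁻¹ = A⁻¹ * Jᵀ := by
    apply Matrix.inv_eq_right_inv
    calc K * (A⁻¹ * Jᵀ) = K * A⁻¹ * Jᵀ := by rw [Matrix.mul_assoc]
      _ = 1 := by
        have : K * A⁻¹ = (Jᵀ)⁻¹ := by
          refine (Matrix.inv_eq_right_inv ?_).symm
          rw [← Matrix.mul_assoc, h2, Matrix.mul_nonsing_inv _ hAd]
        rw [this, Matrix.nonsing_inv_mul _ hJTd]
  have hFsK : Fs = J * F * K⁻¹ := by
    rw [← h1, Matrix.mul_assoc, Matrix.mul_nonsing_inv _ hKd, Matrix.mul_one]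
  -- G = F * A⁻¹
  have hG' : G = F * A⁻¹ := by
    rw [hG, hFsK, Matrix.transpose_nonsing_inv, hKinv]
    calc J⁻¹ * (J * F * (A⁻¹ * Jᵀ)) * (Jᵀ)⁻¹
        = (J⁻¹ * J) * (F * A⁻¹) * (Jᵀ * (Jᵀ)⁻¹) := by
          simp only [Matrix.mul_assoc]
      _ = F * A⁻¹ := by
          rw [Matrix.nonsing_inv_mul _ hJd, Matrix.mul_nonsing_inv _ hJTd,
            Matrix.one_mul, Matrix.mul_one]
  refine ⟨hG', ?_, ?_⟩
  · -- (1 + G*Θ) * (1 - F*Θ) = 1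
    have hB : A⁻¹ * Θ * F = A⁻¹ - 1 := by
      have h := Matrix.nonsing_inv_mul A hAd
      rw [hA] at h
      have : A⁻¹ * (1 - Θ * F) = A⁻¹ - A⁻¹ * Θ * F := by noncomm_ring
      rw [this] at h
      linear_combination (norm := noncomm_ring) -h
    have e1 : (1 + G * Θ) * (1 - F * Θ) = 1 := by
      rw [hG']
      have h : (1 + F * A⁻¹ * Θ) * (1 - F * Θ)
          = 1 - F * Θ + F * A⁻¹ * Θ - F * (A⁻¹ * Θ * F) * Θ := by noncomm_ring
      rw [h, hB]; noncomm_ring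
    exact (Matrix.isUnit_iff_isUnit_det _).mpr
      (IsUnit.of_mul_eq_one (1 - F * Θ).det
        (by rw [← Matrix.det_mul, e1, Matrix.det_one]))
  · -- F = (1 + G*Θ)⁻¹ * G
    have hB : A⁻¹ * Θ * F = A⁻¹ - 1 := by
      have h := Matrix.nonsing_inv_mul A hAd
      rw [hA] at h
      have : A⁻¹ * (1 - Θ * F) = A⁻¹ - A⁻¹ * Θ * F := by noncomm_ring
      rw [this] at h
      linear_combination (norm := noncomm_ring) -h
    have e1 : (1 + G * Θ) * (1 - F * Θ) = 1 := by
      rw [hG']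
      have h : (1 + F * A⁻¹ * Θ) * (1 - F * Θ)
          = 1 - F * Θ + F * A⁻¹ * Θ - F * (A⁻¹ * Θ * F) * Θ := by noncomm_ring
      rw [h, hB]; noncomm_ring
    have hinv1 : (1 + G * Θ)⁻¹ = 1 - F * Θ := Matrix.inv_eq_right_inv e1
    rw [hinv1, hG']
    have h : (1 - F * Θ) * (F * A⁻¹) = F * ((1 - Θ * F) * A⁻¹) := by noncomm_ring
    rw [h, ← hA, Matrix.mul_nonsing_inv _ hAd, Matrix.mul_one]
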